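/- Let D be a Bézout domain with quotient field K, let z ∈ K, and write z = x/y where xD = zD ∩ D (so x generates the positive part) and yD = z⁻¹D ∩ D generates the negative part of the fractional ideal zD (with xD + yD = D). Then z is almost integral over D if and only if y⁻¹ is almost integral over D. -/

import Mathlib

/-- `z ∈ K` is almost integral over `D` if there is a nonzero `c ∈ D` with
`c·zⁿ ∈ D` for every positive integer `n`. -/
def AlmostIntegral (D : Type*) {K : Type*} [CommRing D] [CommRing K] [Algebra D K]
    (z : K) : Prop :=
  ∃ c : D, c ≠ 0 ∧ ∀ n : ℕ, 0 < n → ∃ d : D, algebraMap D K c * z ^ n = algebraMap D K d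

open nonZeroDivisors in
/-- In a Bézout domain, writing `z = x/y` with `xD = zD ⊓ D`, `yD = (zD)⁻¹ ⊓ D`
(so `xD + yD = D`), `z` is almost integral over `D` iff `y⁻¹` is. -/
theorem stmt10 (D K : Type*) [CommRing D] [IsDomain D] [IsBezout D] [Field K]
    [Algebra D K] [IsFractionRing D K] (z : K) (x y : D) (hy : y ≠ 0)
    (hpos : FractionalIdeal.spanSingleton D⁰ z ⊓ 1 =
      FractionalIdeal.spanSingleton D⁰ (algebraMap D K x))
    (hneg : (FractionalIdeal.spanSingleton D⁰ z)⁻¹ ⊓ 1 =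
      FractionalIdeal.spanSingleton D⁰ (algebraMap D K y))
    (hxy : z * algebraMap D K y = algebraMap D K x)
    (hcop : IsCoprime x y) :
    AlmostIntegral D z ↔ AlmostIntegral D (algebraMap D K y)⁻¹ := by
  have hinj := IsFractionRing.injective D K
  have hyK : algebraMap D K y ≠ 0 := fun h => hy (hinj (by simpa using h))
  have hz : z = algebraMap D K x * (algebraMap D K y)⁻¹ := by
    field_simp
    linear_combination hxy
  constructor
  · rintro ⟨c, hc, H⟩
    refine ⟨c, hc, fun n hn => ?_⟩
    obtain ⟨d, hd⟩ := H n hn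
    have key : c * x ^ n = d * y ^ n := by
      apply hinj
      push_cast [map_mul, map_pow]
      rw [hz] at hd
      field_simp at hd
      rw [div_pow, mul_div_assoc', div_eq_iff (pow_ne_zero n hyK)] at hd
      linear_combination hd
    have hdvd : y ^ n ∣ c := by
      have h1 : y ^ n ∣ c * x ^ n := ⟨d, by linear_combination key⟩
      exact (hcop.symm.pow (m := n) (n := n)).dvd_of_dvd_mul_right h1
    obtain ⟨e, he⟩ := hdvd
    refine ⟨e, ?_⟩
    have : (algebraMap D K c) = algebraMap D K y ^ n * algebraMap D K e := by
      rw [← map_pow, ← map_mul, ← he]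
    rw [this]
    field_simp
    rw [one_div, inv_pow, mul_comm (algebraMap D K y ^ n), mul_assoc,
      mul_inv_cancel₀ (pow_ne_zero n hyK), mul_one]
  · rintro ⟨c, hc, H⟩
    refine ⟨c, hc, fun n hn => ?_⟩
    obtain ⟨d, hd⟩ := H n hn
    refine ⟨d * x ^ n, ?_⟩
    rw [hz, mul_pow, map_mul, map_pow, ← mul_assoc, mul_comm (algebraMap D K c),
      mul_assoc, hd, mul_comm]
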